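/- (Theorem 3.1, BetaMarginalBALD.) Let C ≥ 1 and α_i, β_i > 0 for i = 1,…,C, and for each i let P_i be a random variable with distribution Beta(α_i,β_i) and m_i = E[P_i] = α_i/(α_i+β_i). Then the mutual-information quantity H(Y) − E[H(Y|Φ)] = −∑_{i=1}^{C} m_i·log m_i + ∑_{i=1}^{C} E[P_i·log P_i] equals ∑_{i=1}^{C} (α_i−1)·ψ(α_i+β_i) − ∑_{i=1}^{C} (α_i/(α_i+β_i))·log(α_i/(α_i+β_i)) − ∑_{i=1}^{C} [α_i(α_i−1)/(α_i+β_i)]·ψ(α_i) − ∑_{i=1}^{C} [β_i(α_i−1)/(α_i+β_i)]·ψ(α_i+β_i+1) + ∑_{i=1}^{C} [α_i²/(α_i+β_i)]·[ψ(α_i+1) − ψ(α_i+β_i+1)], where ψ is the digamma function. -/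

import Mathlib

open Real MeasureTheory

/-- The Beta function `B(α,β) = Γ(α)Γ(β)/Γ(α+β)`. -/
noncomputable def betaB (α β : ℝ) : ℝ := Gamma α * Gamma β / Gamma (α + β)

/-- The density of the `Beta(α,β)` distribution on `[0,1]`. -/
noncomputable def betaDensity (α β : ℝ) (p : ℝ) : ℝ :=
  p ^ (α - 1) * (1 - p) ^ (β - 1) / betaB α β

/-- The digamma function `ψ`, the derivative of `log Γ`. -/
noncomputable def digamma (x : ℝ) : ℝ := deriv (fun y : ℝ => Real.log (Gamma y)) x

open Set

section AuxLemmas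

lemma hasDerivAt_logGamma {x : ℝ} (hx : 0 < x) :
    HasDerivAt (fun y : ℝ => Real.log (Gamma y)) (digamma x) x := by
  have hd : DifferentiableAt ℝ Real.Gamma x :=
    Real.differentiableAt_Gamma (fun m => by
      have : (0:ℝ) ≤ m := Nat.cast_nonneg m
      intro h; rw [h] at hx; linarith)
  have h := hd.hasDerivAt.log (Real.Gamma_pos_of_pos hx).ne'
  have hdd : digamma x = deriv Real.Gamma x / Real.Gamma x := h.deriv
  rw [hdd]; exact h

lemma hasDerivAt_Gamma' {x : ℝ} (hx : 0 < x) :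
    HasDerivAt Real.Gamma (digamma x * Gamma x) x := by
  have hd : DifferentiableAt ℝ Real.Gamma x :=
    Real.differentiableAt_Gamma (fun m => by
      have : (0:ℝ) ≤ m := Nat.cast_nonneg m
      intro h; rw [h] at hx; linarith)
  have h := hd.hasDerivAt.log (Real.Gamma_pos_of_pos hx).ne'
  have hdd : digamma x = deriv Real.Gamma x / Real.Gamma x := h.deriv
  have : digamma x * Gamma x = deriv Real.Gamma x := by
    rw [hdd]; field_simp
  rw [this]; exact hd.hasDerivAt

lemma digamma_add_one {x : ℝ} (hx : 0 < x) : digamma (x + 1) = digamma x + 1 / x := by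
  have h1 : HasDerivAt (fun y : ℝ => Real.log (Gamma (y + 1))) (digamma (x + 1) * 1) x :=
    (hasDerivAt_logGamma (by linarith)).comp x ((hasDerivAt_id x).add_const 1)
  have h2 : HasDerivAt (fun y : ℝ => Real.log y + Real.log (Gamma y)) (x⁻¹ + digamma x) x :=
    (Real.hasDerivAt_log hx.ne').add (hasDerivAt_logGamma hx)
  have hev : (fun y : ℝ => Real.log (Gamma (y + 1)))
      =ᶠ[nhds x] fun y => Real.log y + Real.log (Gamma y) := by
    filter_upwards [eventually_gt_nhds hx] with y hy
    rw [Real.Gamma_add_one hy.ne', Real.log_mul hy.ne' (Real.Gamma_pos_of_pos hy).ne']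
  have h2' : HasDerivAt (fun y : ℝ => Real.log (Gamma (y + 1))) (x⁻¹ + digamma x) x :=
    h2.congr_of_eventuallyEq hev
  have := h1.unique h2'
  rw [mul_one] at this
  rw [this, one_div]; ring

lemma complex_integrand_eq {a b : ℝ} (x : ℝ) (hx : x ∈ Ioc (0:ℝ) 1) :
    (x:ℂ) ^ ((a:ℂ) - 1) * (1 - (x:ℂ)) ^ ((b:ℂ) - 1)
      = ((x ^ (a-1) * (1-x) ^ (b-1) : ℝ) : ℂ) := by
  have h1 : ((a:ℂ) - 1) = ((a - 1 : ℝ) : ℂ) := by push_cast; ring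
  have h2 : ((b:ℂ) - 1) = ((b - 1 : ℝ) : ℂ) := by push_cast; ring
  have h3 : (1 - (x:ℂ)) = ((1 - x : ℝ) : ℂ) := by push_cast; ring
  rw [h1, h2, h3, ← Complex.ofReal_cpow hx.1.le, ← Complex.ofReal_cpow (by linarith [hx.2]),
    ← Complex.ofReal_mul]

lemma betaIntegrand_integrableOn {a b : ℝ} (ha : 0 < a) (hb : 0 < b) :
    IntegrableOn (fun x : ℝ => x ^ (a-1) * (1-x) ^ (b-1)) (Ioc 0 1) := by
  have h := Complex.betaIntegral_convergent (u := (a:ℂ)) (v := (b:ℂ)) (by simpa) (by simpa)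
  rw [intervalIntegrable_iff_integrableOn_Ioc_of_le (by norm_num)] at h
  have h2 : IntegrableOn (fun x : ℝ =>
      ((x:ℂ) ^ ((a:ℂ) - 1) * (1 - (x:ℂ)) ^ ((b:ℂ) - 1)).re) (Ioc 0 1) := h.re
  refine h2.congr_fun (fun x hx => ?_) measurableSet_Ioc
  dsimp only
  rw [complex_integrand_eq x hx, Complex.ofReal_re]

lemma real_betaIntegral {a b : ℝ} (ha : 0 < a) (hb : 0 < b) :
    ∫ x in Ioc (0:ℝ) 1, x ^ (a-1) * (1-x) ^ (b-1) = betaB a b := by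
  have h := Complex.Gamma_mul_Gamma_eq_betaIntegral (s := (a:ℂ)) (t := (b:ℂ)) (by simpa) (by simpa)
  have hab : ((a:ℂ) + b) = ((a + b : ℝ) : ℂ) := by push_cast; ring
  have hG : Complex.Gamma ((a:ℂ) + b) ≠ 0 := by
    rw [hab, Complex.Gamma_ofReal]
    exact_mod_cast (Real.Gamma_pos_of_pos (by linarith : (0:ℝ) < a + b)).ne'
  have hbeta : Complex.betaIntegral a b = ((betaB a b : ℝ) : ℂ) := by
    have : Complex.betaIntegral a b
        = Complex.Gamma a * Complex.Gamma b / Complex.Gamma ((a:ℂ) + b) := by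
      rw [eq_div_iff hG, mul_comm, ← h]
    rw [this, hab, Complex.Gamma_ofReal, Complex.Gamma_ofReal, Complex.Gamma_ofReal]
    unfold betaB; push_cast; ring
  have hval : Complex.betaIntegral a b
      = ((∫ x in Ioc (0:ℝ) 1, x ^ (a-1) * (1-x) ^ (b-1) : ℝ) : ℂ) := by
    rw [Complex.betaIntegral, intervalIntegral.integral_of_le (by norm_num : (0:ℝ) ≤ 1)]
    rw [setIntegral_congr_fun measurableSet_Ioc (fun x hx => complex_integrand_eq x hx)]
    exact integral_ofReal
  rw [hval] at hbeta
  exact_mod_cast hbeta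

lemma hasDerivAt_betaB {a b : ℝ} (ha : 0 < a) (hb : 0 < b) :
    HasDerivAt (fun y => betaB y b) (betaB a b * (digamma a - digamma (a+b))) a := by
  have hab : (0:ℝ) < a + b := by linarith
  have h1 : HasDerivAt (fun y : ℝ => Gamma y * Gamma b) (digamma a * Gamma a * Gamma b) a :=
    (hasDerivAt_Gamma' ha).mul_const _
  have h2 : HasDerivAt (fun y : ℝ => Gamma (y + b)) (digamma (a+b) * Gamma (a+b) * 1) a :=
    (hasDerivAt_Gamma' hab).comp_of_eq a ((hasDerivAt_id a).add_const b) (by simp)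
  rw [mul_one] at h2
  have h := h1.div h2 (Real.Gamma_pos_of_pos hab).ne'
  refine HasDerivAt.congr_deriv h ?_
  unfold betaB
  have h3 := (Real.Gamma_pos_of_pos hab).ne'
  field_simp

lemma betaIntegrand_log_integral {a b : ℝ} (ha : 0 < a) (hb : 0 < b) :
    ∫ x in Ioc (0:ℝ) 1, x ^ (a-1) * Real.log x * (1-x) ^ (b-1)
      = betaB a b * (digamma a - digamma (a+b)) := by
  set μ := volume.restrict (Ioc (0:ℝ) 1) with hμ
  set F : ℝ → ℝ → ℝ := fun y x => x ^ (y-1) * (1-x) ^ (b-1) with hF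
  set F' : ℝ → ℝ → ℝ := fun y x => x ^ (y-1) * Real.log x * (1-x) ^ (b-1) with hF'
  have hmeasF : ∀ y : ℝ, AEStronglyMeasurable (F y) μ := fun y => by
    have : Measurable (F y) := by unfold F; fun_prop
    exact this.aestronglyMeasurable
  have hmeasF' : AEStronglyMeasurable (F' a) μ := by
    have : Measurable (F' a) := by
      unfold F'
      exact (((by fun_prop : Measurable (fun x : ℝ => x ^ (a-1))).mul
        Real.measurable_log).mul (by fun_prop))
    exact this.aestronglyMeasurable
  have hbound_int : Integrable (fun x : ℝ => (4/a) * (x ^ (a/4-1) * (1-x) ^ (b-1))) μ :=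
    ((betaIntegrand_integrableOn (by linarith : (0:ℝ) < a/4) hb).const_mul _)
  have hae : ∀ᵐ x ∂μ, x ∈ Ioc (0:ℝ) 1 := ae_restrict_mem measurableSet_Ioc
  have h_bound : ∀ᵐ x ∂μ, ∀ y ∈ Metric.ball a (a/2),
      ‖F' y x‖ ≤ (4/a) * (x ^ (a/4-1) * (1-x) ^ (b-1)) := by
    filter_upwards [hae] with x hx y hy
    have hx0 : 0 < x := hx.1
    have hx1 : x ≤ 1 := hx.2
    have h1x : (0:ℝ) ≤ 1 - x := by linarith
    have hy2 : a/2 - 1 ≤ y - 1 := by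
      have := abs_lt.mp (mem_ball_iff_norm.mp hy); linarith [this.1]
    have e1 : x ^ (y-1) ≤ x ^ (a/2-1) := Real.rpow_le_rpow_of_exponent_ge hx0 hx1 hy2
    have e2 : |Real.log x| ≤ (4/a) * x ^ (-(a/4)) := by
      rw [abs_of_nonpos (Real.log_nonpos hx0.le hx1)]
      have := Real.log_le_rpow_div (inv_nonneg.mpr hx0.le) (by linarith : (0:ℝ) < a/4)
      rw [Real.log_inv, Real.inv_rpow hx0.le, ← Real.rpow_neg hx0.le] at this
      calc -Real.log x ≤ x ^ (-(a/4)) / (a/4) := this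
        _ = (4/a) * x ^ (-(a/4)) := by ring
    have e3 : ‖F' y x‖ = x ^ (y-1) * |Real.log x| * (1-x) ^ (b-1) := by
      rw [hF']; simp only [Real.norm_eq_abs, abs_mul]
      rw [abs_of_nonneg (Real.rpow_nonneg hx0.le _), abs_of_nonneg (Real.rpow_nonneg h1x _)]
    rw [e3]
    have e4 : x ^ (y-1) * |Real.log x| ≤ x ^ (a/2-1) * ((4/a) * x ^ (-(a/4))) :=
      mul_le_mul e1 e2 (abs_nonneg _) (Real.rpow_nonneg hx0.le _)
    have e5 : x ^ (a/2-1) * ((4/a) * x ^ (-(a/4))) = (4/a) * x ^ (a/4-1) := by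
      rw [mul_comm (x ^ (a/2-1)), mul_assoc, ← Real.rpow_add hx0,
        show -(a/4) + (a/2-1) = a/4-1 by ring]
    calc x ^ (y-1) * |Real.log x| * (1-x) ^ (b-1)
        ≤ (4/a) * x ^ (a/4-1) * (1-x) ^ (b-1) := by
          rw [← e5]; exact mul_le_mul_of_nonneg_right e4 (Real.rpow_nonneg h1x _)
      _ = (4/a) * (x ^ (a/4-1) * (1-x) ^ (b-1)) := by ring
  have h_diff : ∀ᵐ x ∂μ, ∀ y ∈ Metric.ball a (a/2), HasDerivAt (F · x) (F' y x) y := by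
    filter_upwards [hae] with x hx y _
    have hx0 : 0 < x := hx.1
    have h0 : HasDerivAt (fun y : ℝ => x ^ (y-1)) (x ^ (y-1) * Real.log x * 1) y :=
      ((Real.hasStrictDerivAt_const_rpow hx0 (y-1)).hasDerivAt).comp y
        ((hasDerivAt_id y).sub_const 1)
    rw [mul_one] at h0
    exact h0.mul_const _
  obtain ⟨-, hderiv⟩ := hasDerivAt_integral_of_dominated_loc_of_deriv_le
    (Metric.ball_mem_nhds a (half_pos ha)) (Filter.Eventually.of_forall hmeasF)
    (betaIntegrand_integrableOn ha hb) hmeasF' h_bound hbound_int h_diff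
  have hev : (fun y => ∫ x, F y x ∂μ) =ᶠ[nhds a] fun y => betaB y b := by
    filter_upwards [eventually_gt_nhds ha] with y hy
    exact real_betaIntegral hy hb
  have hB := (hasDerivAt_betaB ha hb).congr_of_eventuallyEq hev
  exact (hderiv.unique hB)

lemma betaB_pos {a b : ℝ} (ha : 0 < a) (hb : 0 < b) : 0 < betaB a b :=
  div_pos (mul_pos (Real.Gamma_pos_of_pos ha) (Real.Gamma_pos_of_pos hb))
    (Real.Gamma_pos_of_pos (by linarith))

lemma betaB_succ {a b : ℝ} (ha : 0 < a) (hb : 0 < b) :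
    betaB (a+1) b = (a / (a+b)) * betaB a b := by
  unfold betaB
  rw [Real.Gamma_add_one ha.ne', show a + 1 + b = (a + b) + 1 by ring,
    Real.Gamma_add_one (by positivity : a + b ≠ 0)]
  have h1 := (Real.Gamma_pos_of_pos (show (0:ℝ) < a + b by linarith)).ne'
  field_simp

lemma key_integral {a b : ℝ} (ha : 0 < a) (hb : 0 < b) :
    ∫ p in Icc (0:ℝ) 1, p * Real.log p * betaDensity a b p
      = a / (a+b) * (digamma (a+1) - digamma (a+b+1)) := by
  rw [integral_Icc_eq_integral_Ioc]
  have hcong : ∀ p ∈ Ioc (0:ℝ) 1, p * Real.log p * betaDensity a b p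
      = (p ^ ((a+1)-1) * Real.log p * (1-p) ^ (b-1)) / betaB a b := by
    intro p hp
    unfold betaDensity
    rw [show (a+1)-1 = a by ring, show p ^ a = p ^ (1 + (a-1)) by ring_nf,
      Real.rpow_add hp.1, Real.rpow_one]
    ring
  rw [setIntegral_congr_fun measurableSet_Ioc hcong, integral_div,
    betaIntegrand_log_integral (by linarith : (0:ℝ) < a + 1) hb,
    show a + 1 + b = a + b + 1 by ring, betaB_succ ha hb]
  have := (betaB_pos ha hb).ne'
  field_simp

end AuxLemmas

/-- **Theorem 3.1, BetaMarginalBALD.** Let `C ≥ 1` and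
`α_i, β_i > 0`, and let `P_i ~ Beta(α_i,β_i)` with `m_i = α_i/(α_i+β_i)`.
Then the mutual-information quantity
`H(Y) − E[H(Y|Φ)] = −∑ i m_i log m_i + ∑ i E[P_i log P_i]` equals the
closed-form digamma expression of Theorem 3.1. -/
theorem betaMarginalBALD_formula
    (C : ℕ) (hC : 1 ≤ C) (α β : Fin C → ℝ)
    (hα : ∀ i, 0 < α i) (hβ : ∀ i, 0 < β i)
    (m : Fin C → ℝ) (hm : ∀ i, m i = α i / (α i + β i)) :
    -(∑ i, m i * Real.log (m i))
      + ∑ i, ∫ p in Set.Icc (0 : ℝ) 1,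
          p * Real.log p * betaDensity (α i) (β i) p
    = (∑ i, (α i - 1) * digamma (α i + β i))
      - (∑ i, (α i / (α i + β i)) * Real.log (α i / (α i + β i)))
      - (∑ i, (α i * (α i - 1) / (α i + β i)) * digamma (α i))
      - (∑ i, (β i * (α i - 1) / (α i + β i)) * digamma (α i + β i + 1))
      + ∑ i, (α i ^ 2 / (α i + β i)) *
          (digamma (α i + 1) - digamma (α i + β i + 1)) := by
  rw [← Finset.sum_neg_distrib, ← Finset.sum_add_distrib,
    ← Finset.sum_sub_distrib, ← Finset.sum_sub_distrib, ← Finset.sum_sub_distrib,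
    ← Finset.sum_add_distrib]
  refine Finset.sum_congr rfl (fun i _ => ?_)
  have hA := hα i
  have hB := hβ i
  have hAB : (0:ℝ) < α i + β i := by linarith
  rw [key_integral hA hB, hm i]
  rw [digamma_add_one hA, show α i + β i + 1 = (α i + β i) + 1 by ring,
    digamma_add_one hAB]
  field_simp
  ring
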